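/- arXiv:1909.02135 — 3 statements merged into one kernel-verified Lean document; each statement's English description precedes it below -/
import Mathlib

section
/- Let B be a Blaschke product with zero sequence (a_n), let B_1 ≡ 1 and for n ≥ 2 let B_n be the finite Blaschke product with zeros a_1,…,a_{n-1}, and set g_n(z) = B_n(z)·(1-|a_n|²)^{1/2}/(1 - conj(a_n)·z). Suppose (c_n) is a sequence of complex numbers with ∑_n |c_n|² < ∞ and f(z) = ∑_n c_n g_n(z) for all z ∈ U (f is an arbitrary element of the model space (BH²)^⊥). If α > -1 and 0 < p < 2/3 + (2/3)α, then f' belongs to A^p_α, i.e. ∬_U |f'(z)|^p (1-|z|)^α dA(z) < ∞. -/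
open Complex MeasureTheory

noncomputable section

/-- The open unit disc in ℂ. -/
def unitDisc : Set ℂ := {z : ℂ | ‖z‖ < 1}

/-- A single Blaschke factor with zero `a`. -/
def bFactor (a z : ℂ) : ℂ :=
  ((starRingEnd ℂ) a / (‖a‖ : ℂ)) * ((a - z) / (1 - (starRingEnd ℂ) a * z))

/-- The Blaschke product with zeros `a n`. -/
def blaschke (a : ℕ → ℂ) (z : ℂ) : ℂ := ∏' n, bFactor (a n) z

/-- The pseudohyperbolic distance on the unit disc. -/
def pdist (z w : ℂ) : ℝ := ‖(z - w) / (1 - (starRingEnd ℂ) w * z)‖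

/-- The weighted Bergman integral `∬_U |g(z)|^p (1-|z|)^α dA(z)`;
`g ∈ A^p_α` means this is finite. -/
def bergman (g : ℂ → ℂ) (p α : ℝ) : ENNReal :=
  ∫⁻ z in unitDisc, ENNReal.ofReal (‖g z‖ ^ p * (1 - ‖z‖) ^ α)

/-- The finite subproduct `B_n` with zeros `a 0, …, a (n-1)` (`subProd a 0 = 1`). -/
def subProd (a : ℕ → ℂ) (n : ℕ) (z : ℂ) : ℂ := ∏ m ∈ Finset.range n, bFactor (a m) z

/-- The orthonormal basis functions `g_n(z) = B_n(z)·(1-|a_n|²)^{1/2}/(1 - conj(a_n)·z)`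
of the model space `(BH²)^⊥`. -/
def gfun (a : ℕ → ℂ) (n : ℕ) (z : ℂ) : ℂ :=
  subProd a n z * (Real.sqrt (1 - ‖a n‖ ^ 2) : ℂ) / (1 - (starRingEnd ℂ) (a n) * z)

lemma normSq_identity (a z : ℂ) :
    Complex.normSq (1 - (starRingEnd ℂ) a * z) - Complex.normSq (a - z)
      = (1 - Complex.normSq a) * (1 - Complex.normSq z) := by
  simp only [Complex.normSq_apply, Complex.sub_re, Complex.sub_im, Complex.mul_re,
    Complex.mul_im, Complex.one_re, Complex.one_im, Complex.conj_re, Complex.conj_im]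
  ring

lemma abs_one_sub_ge {w : ℂ} : 1 - ‖w‖ ≤ ‖1 - w‖ := by
  have := norm_add_le (1 - w) w
  simp only [sub_add_cancel, norm_one] at this
  linarith

lemma abs_denom_pos {a z : ℂ} (hz : ‖z‖ < 1) (ha : ‖a‖ ≤ 1) :
    0 < ‖1 - (starRingEnd ℂ) a * z‖ := by
  have h1 : ‖(starRingEnd ℂ) a * z‖ < 1 := by
    rw [norm_mul, Complex.norm_conj]
    nlinarith [norm_nonneg a, norm_nonneg z]
  have := abs_one_sub_ge (w := (starRingEnd ℂ) a * z)
  linarith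

lemma abs_bFactor {a z : ℂ} (ha : 0 < ‖a‖) :
    ‖bFactor a z‖
      = ‖a - z‖ / ‖1 - (starRingEnd ℂ) a * z‖ := by
  unfold bFactor
  rw [norm_mul, norm_div, norm_div]
  rw [Complex.norm_conj, Complex.norm_of_nonneg (norm_nonneg a),
    div_self ha.ne', one_mul]

lemma abs_bFactor_le_one {a z : ℂ} (ha : 0 < ‖a‖) (ha1 : ‖a‖ < 1)
    (hz : ‖z‖ < 1) : ‖bFactor a z‖ ≤ 1 := by
  rw [abs_bFactor ha]
  have hd := abs_denom_pos hz ha1.le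
  rw [div_le_one hd]
  have h := normSq_identity a z
  have h1 : Complex.normSq a < 1 := by
    rw [← Complex.sq_norm]; nlinarith [norm_nonneg a]
  have h2 : Complex.normSq z < 1 := by
    rw [← Complex.sq_norm]; nlinarith [norm_nonneg z]
  have h3 : Complex.normSq (a - z) ≤ Complex.normSq (1 - (starRingEnd ℂ) a * z) := by nlinarith
  calc ‖a - z‖ = Real.sqrt (Complex.normSq (a - z)) := Complex.norm_def _
    _ ≤ Real.sqrt (Complex.normSq (1 - (starRingEnd ℂ) a * z)) := Real.sqrt_le_sqrt h3
    _ = ‖1 - (starRingEnd ℂ) a * z‖ := (Complex.norm_def _).symm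

lemma abs_subProd_le_one (a : ℕ → ℂ)
    (ha : ∀ n, 0 < ‖a n‖ ∧ ‖a n‖ < 1)
    (n : ℕ) {z : ℂ} (hz : ‖z‖ < 1) : ‖subProd a n z‖ ≤ 1 := by
  induction n with
  | zero => simp [subProd]
  | succ k ih =>
    have : subProd a (k+1) z = subProd a k z * bFactor (a k) z := by
      simp [subProd, Finset.prod_range_succ]
    rw [this, norm_mul]
    have h1 := abs_bFactor_le_one (ha k).1 (ha k).2 hz
    have h2 := norm_nonneg (subProd a k z)
    have h3 := norm_nonneg (bFactor (a k) z)
    nlinarith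

lemma gfun_telescope (a : ℕ → ℂ)
    (ha : ∀ n, 0 < ‖a n‖ ∧ ‖a n‖ < 1)
    (n : ℕ) {z : ℂ} (hz : ‖z‖ < 1) :
    (1 - ‖z‖ ^ 2) * ‖gfun a n z‖ ^ 2
      = ‖subProd a n z‖ ^ 2 - ‖subProd a (n+1) z‖ ^ 2 := by
  set A := ‖subProd a n z‖ with hA
  set d := ‖1 - (starRingEnd ℂ) (a n) * z‖ with hd
  have hdpos : 0 < d := abs_denom_pos hz (ha n).2.le
  have hu : (0:ℝ) ≤ 1 - ‖a n‖ ^ 2 := by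
    nlinarith [(ha n).2, norm_nonneg (a n)]
  have h1 : ‖gfun a n z‖ ^ 2 = A ^ 2 * (1 - ‖a n‖ ^ 2) / d ^ 2 := by
    unfold gfun
    rw [norm_div, norm_mul, Complex.norm_of_nonneg (Real.sqrt_nonneg _)]
    rw [div_pow, mul_pow, Real.sq_sqrt hu]
  have h2 : ‖subProd a (n+1) z‖ ^ 2 = A ^ 2 * ‖a n - z‖ ^ 2 / d ^ 2 := by
    have : subProd a (n+1) z = subProd a n z * bFactor (a n) z := by
      simp [subProd, Finset.prod_range_succ]
    rw [this, norm_mul, abs_bFactor (ha n).1, mul_pow, div_pow]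
    ring
  have h3 : d ^ 2 - ‖a n - z‖ ^ 2
      = (1 - ‖a n‖ ^ 2) * (1 - ‖z‖ ^ 2) := by
    have := normSq_identity (a n) z
    rw [← Complex.sq_norm, ← Complex.sq_norm (a n - z), ← Complex.sq_norm (a n),
      ← Complex.sq_norm z] at this
    rw [hd]; linarith [this]
  rw [h1, h2]
  field_simp
  nlinarith [h3]

lemma gfun_partial_sum (a : ℕ → ℂ)
    (ha : ∀ n, 0 < ‖a n‖ ∧ ‖a n‖ < 1)
    {z : ℂ} (hz : ‖z‖ < 1) (N : ℕ) :
    ∑ n ∈ Finset.range N, ‖gfun a n z‖ ^ 2 ≤ 1 / (1 - ‖z‖ ^ 2) := by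
  have hzpos : 0 < 1 - ‖z‖ ^ 2 := by nlinarith [norm_nonneg z]
  have key : (1 - ‖z‖ ^ 2) * ∑ n ∈ Finset.range N, ‖gfun a n z‖ ^ 2
      = 1 - ‖subProd a N z‖ ^ 2 := by
    rw [Finset.mul_sum]
    have : ∀ n ∈ Finset.range N, (1 - ‖z‖ ^ 2) * ‖gfun a n z‖ ^ 2
        = ‖subProd a n z‖ ^ 2 - ‖subProd a (n+1) z‖ ^ 2 :=
      fun n _ => gfun_telescope a ha n hz
    rw [Finset.sum_congr rfl this, Finset.sum_range_sub']
    simp [subProd]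
  rw [le_div_iff₀ hzpos, mul_comm, key]
  nlinarith [norm_nonneg (subProd a N z)]

lemma gfun_sq_summable (a : ℕ → ℂ)
    (ha : ∀ n, 0 < ‖a n‖ ∧ ‖a n‖ < 1)
    {z : ℂ} (hz : ‖z‖ < 1) :
    Summable (fun n => ‖gfun a n z‖ ^ 2) :=
  summable_of_sum_range_le (fun n => sq_nonneg _) (gfun_partial_sum a ha hz)

lemma gfun_tsum_le (a : ℕ → ℂ)
    (ha : ∀ n, 0 < ‖a n‖ ∧ ‖a n‖ < 1)
    {z : ℂ} (hz : ‖z‖ < 1) :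
    ∑' n, ‖gfun a n z‖ ^ 2 ≤ 1 / (1 - ‖z‖ ^ 2) :=
  Real.tsum_le_of_sum_range_le (fun n => sq_nonneg _) (gfun_partial_sum a ha hz)

lemma amgm {x y s : ℝ} (hx : 0 ≤ x) (hy : 0 ≤ y) (hs : 0 < s) :
    x * y ≤ (x ^ 2 / s + s * y ^ 2) / 2 := by
  rw [div_add' _ _ _ hs.ne', le_div_iff₀ (by positivity : (0:ℝ) < 2), le_div_iff₀ hs]
  nlinarith [sq_nonneg (x - s * y)]

lemma tsum_abs_bound (a : ℕ → ℂ)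
    (ha : ∀ n, 0 < ‖a n‖ ∧ ‖a n‖ < 1)
    (c : ℕ → ℂ) (hc : Summable (fun n => ‖c n‖ ^ 2))
    {z : ℂ} (hz : ‖z‖ < 1) :
    ‖∑' n, c n * gfun a n z‖
      ≤ ((∑' n, ‖c n‖ ^ 2) + 1) / (2 * Real.sqrt (1 - ‖z‖)) := by
  have hz2 : 0 < 1 - ‖z‖ ^ 2 := by nlinarith [norm_nonneg z]
  set s := Real.sqrt (1 - ‖z‖ ^ 2) with hsdef
  have hs : 0 < s := Real.sqrt_pos.mpr hz2
  have hs2 : s ^ 2 = 1 - ‖z‖ ^ 2 := Real.sq_sqrt hz2.le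
  have hG := gfun_sq_summable a ha hz
  have hterm : ∀ n, ‖c n * gfun a n z‖
      ≤ (‖c n‖ ^ 2 / s + s * ‖gfun a n z‖ ^ 2) / 2 := by
    intro n
    rw [norm_mul]
    exact amgm (norm_nonneg _) (norm_nonneg _) hs
  have hRHS : Summable (fun n => (‖c n‖ ^ 2 / s
      + s * ‖gfun a n z‖ ^ 2) / 2) :=
    ((hc.div_const s).add (hG.mul_left s)).div_const 2
  have habs : Summable (fun n => ‖c n * gfun a n z‖) :=
    Summable.of_nonneg_of_le (fun n => norm_nonneg _) hterm hRHS
  have step1 : ‖∑' n, c n * gfun a n z‖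
      ≤ ∑' n, ‖c n * gfun a n z‖ := by
    have hnorm : Summable (fun n => ‖c n * gfun a n z‖) := by
      exact habs
    have h := norm_tsum_le_tsum_norm hnorm
    exact h
  have step2 : ∑' n, ‖c n * gfun a n z‖
      ≤ ∑' n, (‖c n‖ ^ 2 / s + s * ‖gfun a n z‖ ^ 2) / 2 :=
    Summable.tsum_le_tsum hterm habs hRHS
  have step3 : ∑' n, (‖c n‖ ^ 2 / s + s * ‖gfun a n z‖ ^ 2) / 2
      = ((∑' n, ‖c n‖ ^ 2) / s + s * ∑' n, ‖gfun a n z‖ ^ 2) / 2 := by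
    rw [tsum_div_const, Summable.tsum_add (hc.div_const s) (hG.mul_left s), tsum_div_const,
      tsum_mul_left]
  have step4 : ((∑' n, ‖c n‖ ^ 2) / s
        + s * ∑' n, ‖gfun a n z‖ ^ 2) / 2
      ≤ ((∑' n, ‖c n‖ ^ 2) + 1) / (2 * s) := by
    have h1 : s * ∑' n, ‖gfun a n z‖ ^ 2 ≤ 1 / s := by
      have := gfun_tsum_le a ha hz
      have h2 : s * ∑' n, ‖gfun a n z‖ ^ 2 ≤ s * (1 / (1 - ‖z‖ ^ 2)) :=
        mul_le_mul_of_nonneg_left this hs.le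
      calc s * ∑' n, ‖gfun a n z‖ ^ 2 ≤ s * (1 / (1 - ‖z‖ ^ 2)) := h2
        _ = 1 / s := by rw [← hs2]; field_simp
    have h3 : ((∑' n, ‖c n‖ ^ 2) / s + s * ∑' n, ‖gfun a n z‖ ^ 2) / 2
        ≤ ((∑' n, ‖c n‖ ^ 2) / s + 1 / s) / 2 := by linarith
    have h4 : ((∑' n, ‖c n‖ ^ 2) / s + 1 / s) / 2
        = ((∑' n, ‖c n‖ ^ 2) + 1) / (2 * s) := by
      rw [← add_div, div_div, mul_comm]
    linarith
  have step5 : ((∑' n, ‖c n‖ ^ 2) + 1) / (2 * s)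
      ≤ ((∑' n, ‖c n‖ ^ 2) + 1) / (2 * Real.sqrt (1 - ‖z‖)) := by
    have hC : 0 ≤ ∑' n, ‖c n‖ ^ 2 := tsum_nonneg fun n => sq_nonneg _
    have h1 : Real.sqrt (1 - ‖z‖) ≤ s := by
      apply Real.sqrt_le_sqrt
      nlinarith [norm_nonneg z]
    have h2 : 0 < Real.sqrt (1 - ‖z‖) := Real.sqrt_pos.mpr (by linarith)
    apply div_le_div_of_nonneg_left (by linarith) (by linarith) (by linarith)
  linarith [step1, step2, step3.le, step4, step5]

lemma denom_ne_zero {a z : ℂ} (hz : ‖z‖ < 1) (ha : ‖a‖ ≤ 1) :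
    1 - (starRingEnd ℂ) a * z ≠ 0 := by
  have h := abs_denom_pos hz ha
  intro h0
  rw [h0] at h
  simp at h

lemma unitDisc_eq : unitDisc = Metric.ball (0:ℂ) 1 := by
  ext z
  simp [unitDisc, Metric.mem_ball, Complex.dist_eq]

lemma isOpen_unitDisc : IsOpen unitDisc := by
  rw [unitDisc_eq]; exact Metric.isOpen_ball

lemma bFactor_diff {a' : ℂ} (ha : ‖a'‖ < 1) :
    DifferentiableOn ℂ (fun z => bFactor a' z) unitDisc := by
  unfold bFactor
  apply DifferentiableOn.const_mul
  apply DifferentiableOn.div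
  · exact ((differentiable_const a').sub differentiable_id).differentiableOn
  · exact ((differentiable_const (1:ℂ)).sub (differentiable_id.const_mul _)).differentiableOn
  · exact fun z hz => denom_ne_zero hz ha.le

lemma subProd_diff (a : ℕ → ℂ)
    (ha : ∀ n, 0 < ‖a n‖ ∧ ‖a n‖ < 1) (n : ℕ) :
    DifferentiableOn ℂ (fun z => subProd a n z) unitDisc := by
  induction n with
  | zero => simp only [subProd, Finset.range_zero, Finset.prod_empty]; exact differentiableOn_const 1
  | succ k ih =>
    have : (fun z => subProd a (k+1) z) = fun z => subProd a k z * bFactor (a k) z := by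
      funext z; simp [subProd, Finset.prod_range_succ]
    rw [this]
    exact ih.mul (bFactor_diff (ha k).2)

lemma gfun_diff (a : ℕ → ℂ)
    (ha : ∀ n, 0 < ‖a n‖ ∧ ‖a n‖ < 1) (n : ℕ) :
    DifferentiableOn ℂ (fun z => gfun a n z) unitDisc := by
  unfold gfun
  apply DifferentiableOn.div
  · exact (subProd_diff a ha n).mul_const _
  · exact ((differentiable_const (1:ℂ)).sub (differentiable_id.const_mul _)).differentiableOn
  · exact fun z hz => denom_ne_zero hz (ha n).2.le

lemma gfun_abs_le (a : ℕ → ℂ)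
    (ha : ∀ n, 0 < ‖a n‖ ∧ ‖a n‖ < 1) (n : ℕ)
    {z : ℂ} {r : ℝ} (hzr : ‖z‖ < r) (hr : r < 1) :
    ‖gfun a n z‖ ≤ Real.sqrt (1 - ‖a n‖ ^ 2) / (1 - r) := by
  have hz1 : ‖z‖ < 1 := lt_trans hzr hr
  have hd : 1 - r < ‖1 - (starRingEnd ℂ) (a n) * z‖ := by
    have h1 : ‖(starRingEnd ℂ) (a n) * z‖ < r := by
      rw [norm_mul, Complex.norm_conj]
      calc ‖a n‖ * ‖z‖ ≤ 1 * ‖z‖ := by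
            apply mul_le_mul_of_nonneg_right (ha n).2.le (norm_nonneg z)
        _ = ‖z‖ := one_mul _
        _ < r := hzr
    have := abs_one_sub_ge (w := (starRingEnd ℂ) (a n) * z)
    linarith
  have hrpos : 0 < 1 - r := by linarith
  unfold gfun
  rw [norm_div, norm_mul, Complex.norm_of_nonneg (Real.sqrt_nonneg _)]
  apply div_le_div₀ (Real.sqrt_nonneg _) ?_ hrpos hd.le
  exact mul_le_of_le_one_left (Real.sqrt_nonneg _) (abs_subProd_le_one a ha n hz1)

lemma F_diffOn (a : ℕ → ℂ)
    (ha : ∀ n, 0 < ‖a n‖ ∧ ‖a n‖ < 1)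
    (hblaschke : Summable (fun n => 1 - ‖a n‖))
    (c : ℕ → ℂ) (hc : Summable (fun n => ‖c n‖ ^ 2))
    {r : ℝ} (hr : r < 1) :
    DifferentiableOn ℂ (fun z => ∑' n, c n * gfun a n z) (Metric.ball (0:ℂ) r) := by
  have hrpos : 0 < 1 - r := by linarith
  have ht : Summable (fun n => 1 - ‖a n‖ ^ 2) := by
    apply Summable.of_nonneg_of_le
      (fun n => by nlinarith [(ha n).2, norm_nonneg (a n)])
      (fun n => ?_) (hblaschke.mul_left 2)
    nlinarith [(ha n).1, (ha n).2, norm_nonneg (a n)]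
  have hu : Summable (fun n =>
      ‖c n‖ * Real.sqrt (1 - ‖a n‖ ^ 2) / (1 - r)) := by
    apply Summable.div_const
    apply Summable.of_nonneg_of_le
      (fun n => mul_nonneg (norm_nonneg _) (Real.sqrt_nonneg _))
      (fun n => ?_) ((hc.add ht).div_const 2)
    have h := amgm (norm_nonneg (c n)) (Real.sqrt_nonneg (1 - ‖a n‖ ^ 2))
      one_pos
    rw [Real.sq_sqrt (by nlinarith [(ha n).2, norm_nonneg (a n)] :
      (0:ℝ) ≤ 1 - ‖a n‖ ^ 2)] at h
    simpa using h
  apply differentiableOn_tsum_of_summable_norm hu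
  · intro n
    have hsub : Metric.ball (0:ℂ) r ⊆ unitDisc := by
      rw [unitDisc_eq]
      exact Metric.ball_subset_ball hr.le
    exact (((gfun_diff a ha n).const_mul (c n)).mono hsub)
  · exact Metric.isOpen_ball
  · intro n w hw
    rw [Metric.mem_ball, Complex.dist_eq, sub_zero] at hw
    rw [norm_mul]
    calc ‖c n‖ * ‖gfun a n w‖
        ≤ ‖c n‖ * (Real.sqrt (1 - ‖a n‖ ^ 2) / (1 - r)) :=
          mul_le_mul_of_nonneg_left (gfun_abs_le a ha n hw hr) (norm_nonneg _)
      _ = ‖c n‖ * Real.sqrt (1 - ‖a n‖ ^ 2) / (1 - r) := by ring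

lemma rpow_three_halves {t : ℝ} (ht : 0 < t) : t ^ ((3:ℝ)/2) = t * Real.sqrt t := by
  have : ((3:ℝ)/2) = 1 + 1/2 := by norm_num
  rw [this, Real.rpow_add ht, Real.rpow_one, ← Real.sqrt_eq_rpow]

lemma deriv_bound (K : ℝ) (hK : 0 ≤ K) (F : ℂ → ℂ)
    (hFd : ∀ r : ℝ, r < 1 → DifferentiableOn ℂ F (Metric.ball (0:ℂ) r))
    (hFb : ∀ w : ℂ, ‖w‖ < 1 →
        ‖F w‖ ≤ K / Real.sqrt (1 - ‖w‖))
    {z : ℂ} (hz : ‖z‖ < 1) :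
    ‖deriv F z‖ ≤ 4 * K * (1 - ‖z‖) ^ (-(3:ℝ)/2) := by
  set t := 1 - ‖z‖ with htdef
  have ht : 0 < t := by simp [htdef]; linarith
  have ht1 : t ≤ 1 := by rw [htdef]; linarith [norm_nonneg z]
  set R := t / 2 with hRdef
  have hR : 0 < R := by positivity
  have hr1 : (3 + ‖z‖) / 4 < 1 := by linarith
  have hsub : Metric.closedBall z R ⊆ Metric.ball (0:ℂ) ((3 + ‖z‖) / 4) := by
    intro w hw
    rw [Metric.mem_closedBall, Complex.dist_eq] at hw
    rw [Metric.mem_ball, Complex.dist_eq, sub_zero]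
    have : ‖w‖ ≤ ‖z‖ + R := by
      calc ‖w‖ = ‖z + (w - z)‖ := by ring_nf
        _ ≤ ‖z‖ + ‖w - z‖ := norm_add_le _ _
        _ ≤ ‖z‖ + R := by linarith
    have h2 : ‖z‖ + R < (3 + ‖z‖) / 4 := by
      rw [hRdef, htdef]; linarith
    linarith
  have hd : DiffContOnCl ℂ F (Metric.ball z R) :=
    (hFd _ hr1).diffContOnCl_ball hsub
  have hC : ∀ w ∈ Metric.sphere z R, ‖F w‖ ≤ K / Real.sqrt R := by
    intro w hw
    rw [Metric.mem_sphere, Complex.dist_eq] at hw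
    have hwa : ‖w‖ ≤ ‖z‖ + R := by
      calc ‖w‖ = ‖z + (w - z)‖ := by ring_nf
        _ ≤ ‖z‖ + ‖w - z‖ := norm_add_le _ _
        _ = ‖z‖ + R := by rw [hw]
    have hw1 : ‖w‖ < 1 := by
      have : ‖z‖ + R < 1 := by rw [hRdef, htdef]; linarith
      linarith
    have h1 : R ≤ 1 - ‖w‖ := by rw [hRdef, htdef]; linarith
    have h2 : Real.sqrt R ≤ Real.sqrt (1 - ‖w‖) := Real.sqrt_le_sqrt h1
    have h3 : 0 < Real.sqrt R := Real.sqrt_pos.mpr hR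
    calc ‖F w‖ ≤ K / Real.sqrt (1 - ‖w‖) := hFb w hw1
      _ ≤ K / Real.sqrt R := div_le_div_of_nonneg_left hK h3 h2
  have hmain : ‖deriv F z‖ ≤ (K / Real.sqrt R) / R :=
    Complex.norm_deriv_le_of_forall_mem_sphere_norm_le hR hd hC
  have hfinal : (K / Real.sqrt R) / R ≤ 4 * K * t ^ (-(3:ℝ)/2) := by
    have hsR : 0 < Real.sqrt R := Real.sqrt_pos.mpr hR
    have hsqrt_half : Real.sqrt t / 2 ≤ Real.sqrt R := by
      have h4 : Real.sqrt (t/4) = Real.sqrt t / 2 := by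
        rw [show t/4 = t * (1/4) by ring, Real.sqrt_mul ht.le,
          show (1:ℝ)/4 = (1/2)^2 by norm_num, Real.sqrt_sq (by norm_num : (0:ℝ) ≤ 1/2)]
        ring
      rw [← h4]
      exact Real.sqrt_le_sqrt (by linarith)
    have hts : 0 < Real.sqrt t := Real.sqrt_pos.mpr ht
    have hprod : t * Real.sqrt t / 4 ≤ Real.sqrt R * R := by
      calc t * Real.sqrt t / 4 = (Real.sqrt t / 2) * (t / 2) := by ring
        _ ≤ Real.sqrt R * R := by
          apply mul_le_mul hsqrt_half (le_refl _) (by positivity) hsR.le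
    have hneg : t ^ (-(3:ℝ)/2) = 1 / (t * Real.sqrt t) := by
      rw [show (-(3:ℝ)/2) = -((3:ℝ)/2) by ring, Real.rpow_neg ht.le,
        rpow_three_halves ht, one_div]
    rw [hneg, div_div]
    calc K / (Real.sqrt R * R) ≤ K / (t * Real.sqrt t / 4) :=
          div_le_div_of_nonneg_left hK (by positivity) hprod
      _ = 4 * K * (1 / (t * Real.sqrt t)) := by
          field_simp
  linarith

lemma pow_rpow_comm (k : ℕ) (γ : ℝ) : ((2:ℝ)^k)^γ = ((2:ℝ)^γ)^k := by
  rw [← Real.rpow_natCast (2:ℝ) k, ← Real.rpow_mul (by norm_num : (0:ℝ) ≤ 2), mul_comm,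
    Real.rpow_mul (by norm_num : (0:ℝ) ≤ 2), Real.rpow_natCast]

lemma half_pow_rpow (k : ℕ) (γ : ℝ) : ((1/2:ℝ)^k)^(-γ) = ((2:ℝ)^γ)^k := by
  have h1 : ((1/2:ℝ)^k) = ((2:ℝ)^k)⁻¹ := by
    rw [one_div, inv_pow]
  rw [h1, Real.inv_rpow (by positivity), Real.rpow_neg (by positivity), inv_inv,
    pow_rpow_comm]

lemma annulus_subset (k : ℕ) :
    {z : ℂ | 1 - (1/2:ℝ)^k ≤ ‖z‖ ∧ ‖z‖ < 1 - (1/2:ℝ)^(k+1)}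
      ⊆ Metric.ball (0:ℂ) (1 - (1/2:ℝ)^(k+1)) \ Metric.ball (0:ℂ) (1 - (1/2:ℝ)^k) := by
  intro z hz
  obtain ⟨h1, h2⟩ := hz
  constructor
  · rw [Metric.mem_ball, Complex.dist_eq, sub_zero]; exact h2
  · rw [Metric.mem_ball, Complex.dist_eq, sub_zero]; push_neg; exact h1

lemma annulus_volume_le (k : ℕ) :
    volume ({z : ℂ | 1 - (1/2:ℝ)^k ≤ ‖z‖ ∧ ‖z‖ < 1 - (1/2:ℝ)^(k+1)})
      ≤ ENNReal.ofReal ((1/2:ℝ)^k) * NNReal.pi := by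
  set r₁ : ℝ := 1 - (1/2:ℝ)^k with hr₁
  set r₂ : ℝ := 1 - (1/2:ℝ)^(k+1) with hr₂
  have hx0 : (0:ℝ) < (1/2:ℝ)^k := by positivity
  have hx1 : (1/2:ℝ)^k ≤ 1 := pow_le_one₀ (by norm_num) (by norm_num)
  have hr₁r₂ : r₁ ≤ r₂ := by
    rw [hr₁, hr₂, pow_succ]
    nlinarith
  have hr₁0 : 0 ≤ r₁ := by rw [hr₁]; linarith
  have hsub := annulus_subset k
  calc volume ({z : ℂ | 1 - (1/2:ℝ)^k ≤ ‖z‖ ∧ ‖z‖ < 1 - (1/2:ℝ)^(k+1)})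
      ≤ volume (Metric.ball (0:ℂ) r₂ \ Metric.ball (0:ℂ) r₁) := measure_mono hsub
    _ = volume (Metric.ball (0:ℂ) r₂) - volume (Metric.ball (0:ℂ) r₁) := by
        apply measure_diff (Metric.ball_subset_ball hr₁r₂)
          measurableSet_ball.nullMeasurableSet
        rw [Complex.volume_ball]
        exact ENNReal.mul_ne_top (by simp [ENNReal.pow_ne_top]) ENNReal.coe_ne_top
    _ ≤ ENNReal.ofReal ((1/2:ℝ)^k) * NNReal.pi := by
        rw [Complex.volume_ball, Complex.volume_ball]
        rw [tsub_le_iff_right]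
        have e1 : (ENNReal.ofReal r₂) ^ 2 = ENNReal.ofReal (r₂^2) := by
          rw [ENNReal.ofReal_pow (by linarith)]
        have e2 : (ENNReal.ofReal r₁) ^ 2 = ENNReal.ofReal (r₁^2) := by
          rw [ENNReal.ofReal_pow hr₁0]
        rw [e1, e2, ← add_mul, ← ENNReal.ofReal_add (by positivity) (by positivity)]
        apply mul_le_mul_left (ENNReal.ofReal_le_ofReal ?_)
        have hps : (1/2:ℝ)^(k+1) = (1/2:ℝ)^k/2 := by rw [pow_succ]; ring
        rw [hr₁, hr₂]
        nlinarith [hps, hx0, hx1]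
    
lemma lintegral_one_sub_abs {β : ℝ} (hβ : -1 < β) :
    ∫⁻ z in unitDisc, ENNReal.ofReal ((1 - ‖z‖) ^ β) < ⊤ := by
  set γ : ℝ := max (-β) 0 with hγdef
  have hγ0 : 0 ≤ γ := le_max_right _ _
  have hγ1 : γ < 1 := by
    apply max_lt (by linarith) one_pos
  set S : ℕ → Set ℂ := fun k =>
    {z : ℂ | 1 - (1/2:ℝ)^k ≤ ‖z‖ ∧ ‖z‖ < 1 - (1/2:ℝ)^(k+1)} with hSdef
  have hcover : unitDisc ⊆ ⋃ k, S k := by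
    intro z hz
    have hz1 : ‖z‖ < 1 := hz
    have hT : 0 < 1 - ‖z‖ := by linarith
    have hex : ∃ n : ℕ, (1/2:ℝ)^(n+1) < 1 - ‖z‖ := by
      obtain ⟨n, hn⟩ := exists_pow_lt_of_lt_one hT (by norm_num : (1/2:ℝ) < 1)
      exact ⟨n, lt_of_le_of_lt (pow_le_pow_of_le_one (by norm_num) (by norm_num)
        (Nat.le_succ n)) hn⟩
    have hk : (1/2:ℝ)^(Nat.find hex + 1) < 1 - ‖z‖ := Nat.find_spec hex
    have hlow : 1 - (1/2:ℝ)^(Nat.find hex) ≤ ‖z‖ := by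
      rcases Nat.eq_zero_or_pos (Nat.find hex) with h0 | hpos
      · rw [h0]; simpa using norm_nonneg z
      · have hj := Nat.find_min hex (Nat.sub_lt hpos one_pos)
        push_neg at hj
        have heq : (Nat.find hex - 1) + 1 = Nat.find hex := Nat.succ_pred_eq_of_pos hpos
        rw [heq] at hj
        linarith
    exact Set.mem_iUnion.mpr ⟨Nat.find hex, hlow, by linarith⟩
  have hSmeas : ∀ k, MeasurableSet (S k) := by
    intro k
    have : S k = (fun z : ℂ => ‖z‖) ⁻¹' (Set.Ico (1 - (1/2:ℝ)^k) (1 - (1/2:ℝ)^(k+1))) := by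
      ext z; simp [hSdef, Set.mem_Ico]
    rw [this]
    exact continuous_norm.measurable measurableSet_Ico
  have hbound : ∀ k, ∫⁻ z in S k, ENNReal.ofReal ((1 - ‖z‖) ^ β)
      ≤ ENNReal.ofReal (((2:ℝ)^γ)^(k+1) * (1/2:ℝ)^k) * NNReal.pi := by
    intro k
    have hconst : ∀ z ∈ S k, ENNReal.ofReal ((1 - ‖z‖) ^ β)
        ≤ ENNReal.ofReal (((1/2:ℝ)^(k+1))^(-γ)) := by
      intro z hz
      obtain ⟨h1, h2⟩ := hz
      have ht0 : (0:ℝ) < (1/2:ℝ)^(k+1) := by positivity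
      have htlt : (1/2:ℝ)^(k+1) < 1 - ‖z‖ := by linarith
      have hx1 : (1/2:ℝ)^k ≤ 1 := pow_le_one₀ (by norm_num) (by norm_num)
      have ht1 : 1 - ‖z‖ ≤ 1 := by linarith [norm_nonneg z]
      apply ENNReal.ofReal_le_ofReal
      have hmg : -γ ≤ β := by
        have := le_max_left (-β) 0
        linarith [this.trans_eq hγdef.symm]
      calc (1 - ‖z‖) ^ β ≤ (1 - ‖z‖) ^ (-γ) :=
            Real.rpow_le_rpow_of_exponent_ge (by linarith) ht1 hmg
        _ ≤ ((1/2:ℝ)^(k+1)) ^ (-γ) :=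
            Real.rpow_le_rpow_of_nonpos ht0 htlt.le (by linarith)
    calc ∫⁻ z in S k, ENNReal.ofReal ((1 - ‖z‖) ^ β)
        ≤ ∫⁻ _ in S k, ENNReal.ofReal (((1/2:ℝ)^(k+1))^(-γ)) :=
          setLIntegral_mono' (hSmeas k) hconst
      _ = ENNReal.ofReal (((1/2:ℝ)^(k+1))^(-γ)) * volume (S k) := setLIntegral_const _ _
      _ ≤ ENNReal.ofReal (((1/2:ℝ)^(k+1))^(-γ))
            * (ENNReal.ofReal ((1/2:ℝ)^k) * NNReal.pi) :=
          mul_le_mul_right (annulus_volume_le k) _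
      _ = ENNReal.ofReal (((2:ℝ)^γ)^(k+1) * (1/2:ℝ)^k) * NNReal.pi := by
          rw [half_pow_rpow, ← mul_assoc, ← ENNReal.ofReal_mul (by positivity)]
  have h2γ : (0:ℝ) < (2:ℝ)^γ := Real.rpow_pos_of_pos two_pos γ
  have hgeo : Summable (fun k : ℕ => ((2:ℝ)^γ)^(k+1) * (1/2:ℝ)^k) := by
    have hratio : (2:ℝ)^γ / 2 < 1 := by
      have h2 : (2:ℝ)^γ < 2 := by
        calc (2:ℝ)^γ < (2:ℝ)^(1:ℝ) := Real.rpow_lt_rpow_of_exponent_lt one_lt_two hγ1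
          _ = 2 := Real.rpow_one 2
      linarith
    have heq : (fun k : ℕ => ((2:ℝ)^γ)^(k+1) * (1/2:ℝ)^k)
        = fun k : ℕ => (2:ℝ)^γ * ((2:ℝ)^γ/2)^k := by
      funext k
      rw [pow_succ, div_pow]
      field_simp
      rw [one_pow, mul_one, div_pow]; field_simp
    rw [heq]
    exact (summable_geometric_of_lt_one (by positivity) hratio).mul_left _
  calc ∫⁻ z in unitDisc, ENNReal.ofReal ((1 - ‖z‖) ^ β)
      ≤ ∫⁻ z in ⋃ k, S k, ENNReal.ofReal ((1 - ‖z‖) ^ β) :=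
        lintegral_mono_set hcover
    _ ≤ ∑' k, ∫⁻ z in S k, ENNReal.ofReal ((1 - ‖z‖) ^ β) :=
        lintegral_iUnion_le _ _
    _ ≤ ∑' k, ENNReal.ofReal (((2:ℝ)^γ)^(k+1) * (1/2:ℝ)^k) * NNReal.pi :=
        ENNReal.tsum_le_tsum hbound
    _ = (∑' k, ENNReal.ofReal (((2:ℝ)^γ)^(k+1) * (1/2:ℝ)^k)) * NNReal.pi :=
        ENNReal.tsum_mul_right
    _ = ENNReal.ofReal (∑' k, ((2:ℝ)^γ)^(k+1) * (1/2:ℝ)^k) * NNReal.pi := by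
        rw [ENNReal.ofReal_tsum_of_nonneg (fun k => by positivity) hgeo]
    _ < ⊤ := ENNReal.mul_lt_top ENNReal.ofReal_lt_top ENNReal.coe_lt_top

/-- Theorem 4 (Protas): for any Blaschke product `B`, if `α > -1` and `0 < p < 2/3 + (2/3)α`,
then `f' ∈ A^p_α` for all `f ∈ (BH²)^⊥`. -/
theorem stmt3 (a : ℕ → ℂ)
    (ha : ∀ n, 0 < ‖a n‖ ∧ ‖a n‖ < 1)
    (hblaschke : Summable (fun n => 1 - ‖a n‖))
    (c : ℕ → ℂ) (hc : Summable (fun n => ‖c n‖ ^ 2))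
    (f : ℂ → ℂ) (hf : ∀ z ∈ unitDisc, f z = ∑' n, c n * gfun a n z)
    (α p : ℝ) (hα : -1 < α) (hp₁ : 0 < p) (hp₂ : p < 2 / 3 + (2 / 3) * α) :
    bergman (deriv f) p α < ⊤ := by
  set F : ℂ → ℂ := fun z => ∑' n, c n * gfun a n z with hFdef
  set C₂ := ∑' n, ‖c n‖ ^ 2 with hC2
  have hC2nn : 0 ≤ C₂ := tsum_nonneg fun n => sq_nonneg _
  set K := (C₂ + 1) / 2 with hK
  have hKnn : 0 ≤ K := by positivity
  have hFb : ∀ w : ℂ, ‖w‖ < 1 →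
      ‖F w‖ ≤ K / Real.sqrt (1 - ‖w‖) := by
    intro w hw
    have h := tsum_abs_bound a ha c hc hw
    have : (C₂ + 1) / (2 * Real.sqrt (1 - ‖w‖))
        = K / Real.sqrt (1 - ‖w‖) := by
      rw [hK, div_div]
    rw [← this]
    exact h
  have hFd : ∀ r : ℝ, r < 1 → DifferentiableOn ℂ F (Metric.ball (0:ℂ) r) :=
    fun r hr => F_diffOn a ha hblaschke c hc hr
  have hderiv : ∀ z ∈ unitDisc,
      ‖deriv f z‖ ≤ 4 * K * (1 - ‖z‖) ^ (-(3:ℝ)/2) := by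
    intro z hz
    have hzd : ‖z‖ < 1 := hz
    have heq : deriv f z = deriv F z := by
      apply Filter.EventuallyEq.deriv_eq
      filter_upwards [isOpen_unitDisc.mem_nhds hz] with w hw
      exact hf w hw
    rw [heq]
    exact deriv_bound K hKnn F hFd hFb hzd
  have hβ : -1 < α - 3*p/2 := by linarith
  have hpt : ∀ z ∈ unitDisc,
      ENNReal.ofReal (‖deriv f z‖ ^ p * (1 - ‖z‖) ^ α)
      ≤ ENNReal.ofReal ((4*K)^p)
          * ENNReal.ofReal ((1 - ‖z‖) ^ (α - 3*p/2)) := by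
    intro z hz
    have hzd : ‖z‖ < 1 := hz
    have ht : 0 < 1 - ‖z‖ := by linarith
    rw [← ENNReal.ofReal_mul (by positivity)]
    apply ENNReal.ofReal_le_ofReal
    have h1 : ‖deriv f z‖ ^ p
        ≤ (4 * K * (1 - ‖z‖) ^ (-(3:ℝ)/2)) ^ p :=
      Real.rpow_le_rpow (norm_nonneg _) (hderiv z hz) hp₁.le
    have h2 : (4 * K * (1 - ‖z‖) ^ (-(3:ℝ)/2)) ^ p
        = (4*K)^p * (1 - ‖z‖) ^ (-(3:ℝ)/2*p) := by
      rw [Real.mul_rpow (by positivity) (Real.rpow_nonneg ht.le _),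
        ← Real.rpow_mul ht.le]
    have h3 : (1 - ‖z‖) ^ (-(3:ℝ)/2*p) * (1 - ‖z‖) ^ α
        = (1 - ‖z‖) ^ (α - 3*p/2) := by
      rw [← Real.rpow_add ht]
      ring_nf
    calc ‖deriv f z‖ ^ p * (1 - ‖z‖) ^ α
        ≤ (4 * K * (1 - ‖z‖) ^ (-(3:ℝ)/2)) ^ p * (1 - ‖z‖) ^ α :=
          mul_le_mul_of_nonneg_right h1 (Real.rpow_nonneg ht.le α)
      _ = (4*K)^p * ((1 - ‖z‖) ^ (-(3:ℝ)/2*p) * (1 - ‖z‖) ^ α) := by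
          rw [h2]; ring
      _ = (4*K)^p * (1 - ‖z‖) ^ (α - 3*p/2) := by rw [h3]
  unfold bergman
  calc ∫⁻ z in unitDisc,
        ENNReal.ofReal (‖deriv f z‖ ^ p * (1 - ‖z‖) ^ α)
      ≤ ∫⁻ z in unitDisc, ENNReal.ofReal ((4*K)^p)
          * ENNReal.ofReal ((1 - ‖z‖) ^ (α - 3*p/2)) :=
        setLIntegral_mono' isOpen_unitDisc.measurableSet hpt
    _ = ENNReal.ofReal ((4*K)^p)
          * ∫⁻ z in unitDisc, ENNReal.ofReal ((1 - ‖z‖) ^ (α - 3*p/2)) :=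
        lintegral_const_mul' _ _ ENNReal.ofReal_ne_top
    _ < ⊤ := ENNReal.mul_lt_top ENNReal.ofReal_lt_top (lintegral_one_sub_abs hβ)
end
end

section
/- Let B be a Blaschke product with zero sequence (a_n), let B_1 ≡ 1 and for n ≥ 2 let B_n be the finite Blaschke product with zeros a_1,…,a_{n-1}. Then for every z in the open unit disc U, ∑_{n=1}^∞ |B_n(z)|²·(1-|a_n|²)/|1 - conj(a_n)·z|² = (1-|B(z)|²)/(1-|z|²). -/
open Complex MeasureTheory

noncomputable section

lemma key_normSq (a z : ℂ) :
    ‖1 - (starRingEnd ℂ) a * z‖ ^ 2 - ‖a - z‖ ^ 2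
      = (1 - ‖a‖ ^ 2) * (1 - ‖z‖ ^ 2) := by
  rw [Complex.sq_norm, Complex.sq_norm, Complex.sq_norm, Complex.sq_norm]
  simp [Complex.normSq_apply, Complex.sub_re, Complex.sub_im, Complex.mul_re, Complex.mul_im]
  ring

lemma bFactor_sub_one (a z : ℂ) (h0 : 0 < ‖a‖)
    (hD : 1 - (starRingEnd ℂ) a * z ≠ 0) :
    bFactor a z - 1
      = (((‖a‖ : ℂ) - 1) * ((‖a‖ : ℂ) + (starRingEnd ℂ) a * z)) /
        ((‖a‖ : ℂ) * (1 - (starRingEnd ℂ) a * z)) := by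
  have h2 : (starRingEnd ℂ) a * a = ((‖a‖ : ℂ))^2 := by
    rw [← Complex.ofReal_pow, Complex.sq_norm]
    exact_mod_cast (Complex.normSq_eq_conj_mul_self (z := a)).symm
  have hα : (‖a‖ : ℂ) ≠ 0 := by exact_mod_cast h0.ne'
  have hden : (‖a‖ : ℂ) * (1 - (starRingEnd ℂ) a * z) ≠ 0 := mul_ne_zero hα hD
  rw [bFactor, div_mul_div_comm, div_sub_one hden]
  congr 1
  linear_combination h2

lemma D_lower (a z : ℂ) (ha1 : ‖a‖ ≤ 1) (hz : ‖z‖ < 1) :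
    1 - ‖z‖ ≤ ‖1 - (starRingEnd ℂ) a * z‖ := by
  have h1 : ‖(starRingEnd ℂ) a * z‖ ≤ ‖z‖ := by
    rw [norm_mul, Complex.norm_conj]
    nlinarith [norm_nonneg z, norm_nonneg a]
  have h2 : (1:ℝ) - ‖(starRingEnd ℂ) a * z‖ ≤ ‖1 - (starRingEnd ℂ) a * z‖ := by
    have := norm_sub_norm_le (1:ℂ) ((starRingEnd ℂ) a * z)
    simpa using this
  linarith

lemma D_ne (a z : ℂ) (ha1 : ‖a‖ ≤ 1) (hz : ‖z‖ < 1) :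
    1 - (starRingEnd ℂ) a * z ≠ 0 := by
  intro h
  have := D_lower a z ha1 hz
  rw [h] at this
  simp at this
  linarith

/-- The squared norm of the reproducing kernel of the model space, computed via the
orthonormal basis: `∑_n |B_n(z)|²(1-|a_n|²)/|1-conj(a_n)z|² = (1-|B(z)|²)/(1-|z|²)`. -/
theorem stmt14 (a : ℕ → ℂ)
    (ha : ∀ n, 0 < ‖a n‖ ∧ ‖a n‖ < 1)
    (hblaschke : Summable (fun n => 1 - ‖a n‖))
    (B : ℂ → ℂ) (hB : ∀ z ∈ unitDisc, B z = blaschke a z) :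
    ∀ z ∈ unitDisc,
      ∑' n, ‖subProd a n z‖ ^ 2 * (1 - ‖a n‖ ^ 2) /
          ‖1 - (starRingEnd ℂ) (a n) * z‖ ^ 2 =
        (1 - ‖B z‖ ^ 2) / (1 - ‖z‖ ^ 2) := by
  intro z hz
  have hz1 : ‖z‖ < 1 := hz
  have hz0 : 0 ≤ ‖z‖ := norm_nonneg z
  set s : ℝ := 1 - ‖z‖ ^ 2 with hs
  have hspos : 0 < s := by nlinarith
  set term : ℕ → ℝ := fun n => ‖subProd a n z‖ ^ 2 * (1 - ‖a n‖ ^ 2) /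
      ‖1 - (starRingEnd ℂ) (a n) * z‖ ^ 2 with hterm_def
  set f : ℕ → ℝ := fun n => ‖subProd a n z‖ ^ 2 with hf_def
  have hDne : ∀ n, 1 - (starRingEnd ℂ) (a n) * z ≠ 0 := fun n => D_ne _ _ (ha n).2.le hz1
  have hDlb : ∀ n, 1 - ‖z‖ ≤ ‖1 - (starRingEnd ℂ) (a n) * z‖ :=
    fun n => D_lower _ _ (ha n).2.le hz1
  have hdpos : ∀ n, 0 < ‖1 - (starRingEnd ℂ) (a n) * z‖ :=
    fun n => lt_of_lt_of_le (by linarith) (hDlb n)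
  -- |bFactor| value
  have habsb : ∀ n, ‖bFactor (a n) z‖
      = ‖a n - z‖ / ‖1 - (starRingEnd ℂ) (a n) * z‖ := by
    intro n
    rw [bFactor, norm_mul, norm_div, norm_div, Complex.norm_conj, Complex.norm_real,
      norm_norm, div_self (ha n).1.ne', one_mul]
  -- step identity
  have hfs : ∀ n, f (n+1) = f n *
      (‖a n - z‖ ^ 2 / ‖1 - (starRingEnd ℂ) (a n) * z‖ ^ 2) := by
    intro n
    simp only [hf_def, subProd, Finset.prod_range_succ, norm_mul, mul_pow, habsb n, div_pow]
  have hterm : ∀ n, term n = (f n - f (n+1)) / s := by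
    intro n
    have key := key_normSq (a n) z
    rw [← hs] at key
    have hd2 : (0:ℝ) < ‖1 - (starRingEnd ℂ) (a n) * z‖ ^ 2 := pow_pos (hdpos n) 2
    rw [hterm_def]
    simp only
    rw [hfs n]
    simp only [hf_def]
    rw [div_eq_div_iff hd2.ne' hspos.ne']
    rw [sub_mul, mul_assoc (‖subProd a n z‖ ^ 2) (‖a n - z‖ ^ 2 / ‖1 - (starRingEnd ℂ) (a n) * z‖ ^ 2),
      div_mul_cancel₀ _ hd2.ne']
    linear_combination (-(‖subProd a n z‖^2)) * key
  -- partial sums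
  have hps : ∀ N, ∑ i ∈ Finset.range N, term i = (1 - f N) / s := by
    intro N
    rw [Finset.sum_congr rfl (fun i _ => hterm i), ← Finset.sum_div,
      Finset.sum_range_sub' f N]
    have hf0 : f 0 = 1 := by simp [hf_def, subProd]
    rw [hf0]
  -- multipliable / HasProd
  have hM : Multipliable (fun n => bFactor (a n) z) := by
    by_cases hzero : ∃ m, bFactor (a m) z = 0
    · obtain ⟨m, hm⟩ := hzero
      refine ⟨0, ?_⟩
      have hev : ∀ᶠ t in Filter.atTop, (0:ℂ) = ∏ i ∈ t, bFactor (a i) z := by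
        refine Filter.eventually_atTop.2 ⟨{m}, fun t ht => ?_⟩
        exact (Finset.prod_eq_zero (ht (Finset.mem_singleton_self m)) hm).symm
      exact Filter.Tendsto.congr' hev tendsto_const_nhds
    · push_neg at hzero
      set C : ℝ := 4 / (1 - ‖z‖) with hC
      have hCpos : 0 < C := by
        rw [hC]; apply div_pos; · norm_num
        · linarith
      have hg : Summable (fun n => (3/2) * (C * (1 - ‖a n‖))) :=
        (hblaschke.mul_left C).mul_left (3/2)
      have htend : Filter.Tendsto (fun n => 1 - ‖a n‖) Filter.atTop (nhds 0) :=
        hblaschke.tendsto_atTop_zero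
      have hev : ∀ᶠ n in Filter.atTop,
          ‖Complex.log (bFactor (a n) z)‖ ≤ (3/2) * (C * (1 - ‖a n‖)) := by
        have hδ : (0:ℝ) < min (1/2) ((1 - ‖z‖)/8) := by
          have : 0 < (1 - ‖z‖)/8 := by linarith
          exact lt_min (by norm_num) this
        filter_upwards [htend.eventually (gt_mem_nhds hδ)] with n hn
        have han1 : ‖a n‖ < 1 := (ha n).2
        have han0 : 0 < ‖a n‖ := (ha n).1
        have hhalf : (1:ℝ)/2 ≤ ‖a n‖ := by
          have := lt_of_lt_of_le hn (min_le_left _ _)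
          linarith
        have hsmall : 1 - ‖a n‖ ≤ (1 - ‖z‖)/8 :=
          le_of_lt (lt_of_lt_of_le hn (min_le_right _ _))
        -- bound ‖bFactor - 1‖
        have hc : ‖bFactor (a n) z - 1‖ ≤ C * (1 - ‖a n‖) := by
          rw [bFactor_sub_one (a n) z han0 (hDne n), norm_div, norm_mul, norm_mul,
            Complex.norm_real, norm_norm]
          have h1 : ‖(‖a n‖ : ℂ) - 1‖ = 1 - ‖a n‖ := by
            rw [show ((‖a n‖ : ℂ) - 1) = ((‖a n‖ - 1 : ℝ) : ℂ) by
              push_cast; ring, Complex.norm_real, Real.norm_eq_abs, abs_of_nonpos (by linarith)]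
            ring
          have h2 : ‖(‖a n‖ : ℂ) + (starRingEnd ℂ) (a n) * z‖ ≤ 2 := by
            refine le_trans (norm_add_le _ _) ?_
            rw [Complex.norm_real, norm_norm, norm_mul,
              Complex.norm_conj]
            nlinarith
          rw [h1]
          have hden : 0 < ‖a n‖ * ‖1 - (starRingEnd ℂ) (a n) * z‖ :=
            mul_pos han0 (hdpos n)
          rw [div_le_iff₀ hden]
          have hd : (1/2) * (1 - ‖z‖)
              ≤ ‖a n‖ * ‖1 - (starRingEnd ℂ) (a n) * z‖ := by
            have := hDlb n
            nlinarith
          calc (1 - ‖a n‖) * ‖(‖a n‖ : ℂ) + (starRingEnd ℂ) (a n) * z‖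
              ≤ (1 - ‖a n‖) * 2 := by
                apply mul_le_mul_of_nonneg_left h2 (by linarith)
            _ = C * (1 - ‖a n‖) * ((1/2) * (1 - ‖z‖)) := by
                rw [hC]
                have hne : (1:ℝ) - ‖z‖ ≠ 0 := by linarith
                field_simp
                ring
            _ ≤ C * (1 - ‖a n‖) * (‖a n‖ * ‖1 - (starRingEnd ℂ) (a n) * z‖) := by
                apply mul_le_mul_of_nonneg_left hd
                exact mul_nonneg hCpos.le (by linarith)
        have hchalf : ‖bFactor (a n) z - 1‖ ≤ 1/2 := by
          refine le_trans hc ?_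
          calc C * (1 - ‖a n‖) ≤ C * ((1 - ‖z‖)/8) := by
                apply mul_le_mul_of_nonneg_left hsmall hCpos.le
            _ = 1/2 := by
                rw [hC]
                have hne : (1:ℝ) - ‖z‖ ≠ 0 := by linarith
                field_simp
                ring
        have := Complex.norm_log_one_add_half_le_self (z := bFactor (a n) z - 1)
          (by simpa using hchalf)
        rw [show (1 : ℂ) + (bFactor (a n) z - 1) = bFactor (a n) z by ring] at this
        refine le_trans this ?_
        nlinarith
      have hlog : Summable (fun n => Complex.log (bFactor (a n) z)) := by
        apply Summable.of_norm_bounded_eventually hg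
        rwa [Nat.cofinite_eq_atTop]
      exact Complex.multipliable_of_summable_log hlog
  have hP : HasProd (fun n => bFactor (a n) z) (blaschke a z) := hM.hasProd
  have hT : Filter.Tendsto (fun N => subProd a N z) Filter.atTop (nhds (blaschke a z)) :=
    hP.tendsto_prod_nat
  -- limit of (1 - f N)/s
  have h1 : Filter.Tendsto (fun N => ‖subProd a N z‖) Filter.atTop
      (nhds (‖blaschke a z‖)) := (continuous_norm.tendsto _).comp hT
  have hT2 : Filter.Tendsto (fun N => (1 - f N)/s) Filter.atTop
      (nhds ((1 - ‖B z‖ ^ 2)/s)) := by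
    rw [hB z hz]
    exact (Filter.Tendsto.const_sub 1 (h1.pow 2)).div_const s
  -- summable
  have hnn : ∀ n, 0 ≤ term n := by
    intro n
    apply div_nonneg _ (sq_nonneg _)
    apply mul_nonneg (sq_nonneg _)
    nlinarith [(ha n).2, norm_nonneg (a n)]
  have hsum : Summable term := by
    apply summable_of_sum_range_le hnn (c := 1/s)
    intro N
    rw [hps N]
    have hfN : 0 ≤ f N := sq_nonneg _
    exact (div_le_div_iff_of_pos_right hspos).2 (by linarith)
  have hT3 : Filter.Tendsto (fun N => (1 - f N)/s) Filter.atTop (nhds (∑' n, term n)) := by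
    have := hsum.hasSum.tendsto_sum_nat
    refine this.congr fun N => hps N
  exact tendsto_nhds_unique hT3 hT2
end
end

section
/- Let B be a Blaschke product with zero sequence (a_n), let B_1 ≡ 1 and for n ≥ 2 let B_n be the finite Blaschke product with zeros a_1,…,a_{n-1}, and set g_n(z) = B_n(z)·(1-|a_n|²)^{1/2}/(1 - conj(a_n)·z). Suppose (c_n) is a sequence of complex numbers with ∑_n |c_n|² = M² < ∞ and f(z) = ∑_n c_n g_n(z) for all z ∈ U. Then for every z ∈ U, |f(z)| ≤ M·((1-|B(z)|²)/(1-|z|²))^{1/2}; in particular |f(z)| ≤ M·(1-|z|)^{-1/2} on U. -/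
open Complex MeasureTheory

noncomputable section

/- ## Auxiliary lemmas -/

lemma aux_normSq_identity (A z : ℂ) :
    Complex.normSq (1 - (starRingEnd ℂ) A * z) - Complex.normSq (A - z)
      = (1 - Complex.normSq A) * (1 - Complex.normSq z) := by
  simp [Complex.normSq_apply, Complex.mul_re, Complex.mul_im, Complex.sub_re, Complex.sub_im,
    Complex.one_re, Complex.one_im, Complex.conj_re, Complex.conj_im]
  ring

lemma aux_denom_lb (A z : ℂ) (hA : ‖A‖ ≤ 1) :
    1 - ‖z‖ ≤ ‖1 - (starRingEnd ℂ) A * z‖ := by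
  have h1 : (1 : ℝ) = ‖(1 - (starRingEnd ℂ) A * z) + (starRingEnd ℂ) A * z‖ := by
    norm_num
  have h2 := norm_add_le (1 - (starRingEnd ℂ) A * z) ((starRingEnd ℂ) A * z)
  have h3 : ‖(starRingEnd ℂ) A * z‖ ≤ ‖z‖ := by
    rw [norm_mul, Complex.norm_conj]
    calc ‖A‖ * ‖z‖ ≤ 1 * ‖z‖ := by
          exact mul_le_mul_of_nonneg_right hA (norm_nonneg z)
      _ = ‖z‖ := one_mul _
  linarith [h1 ▸ h2]

lemma aux_denom_ne (A z : ℂ) (hA : ‖A‖ ≤ 1) (hz : ‖z‖ < 1) :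
    1 - (starRingEnd ℂ) A * z ≠ 0 := by
  intro h
  have := aux_denom_lb A z hA
  rw [h] at this
  simp at this
  linarith

/-- Telescoping identity for `|g_n|²`. -/
lemma aux_gfun_sq (a : ℕ → ℂ) (n : ℕ) (z : ℂ)
    (h0 : 0 < ‖a n‖) (h1 : ‖a n‖ < 1) (hz : ‖z‖ < 1) :
    ‖gfun a n z‖ ^ 2 * (1 - ‖z‖ ^ 2)
      = ‖subProd a n z‖ ^ 2 - ‖subProd a (n + 1) z‖ ^ 2 := by
  set A := a n with hA
  have hD : (1 - (starRingEnd ℂ) A * z) ≠ 0 := aux_denom_ne A z h1.le hz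
  have haD : 0 < ‖1 - (starRingEnd ℂ) A * z‖ := norm_pos_iff.mpr hD
  have hsucc : subProd a (n + 1) z = subProd a n z * bFactor A z := Finset.prod_range_succ _ _
  have habsb : ‖bFactor A z‖
      = ‖A - z‖ / ‖1 - (starRingEnd ℂ) A * z‖ := by
    unfold bFactor
    rw [norm_mul, norm_div, norm_div, Complex.norm_conj, Complex.norm_real, Real.norm_eq_abs,
      _root_.abs_of_nonneg (norm_nonneg A), div_self (ne_of_gt h0), one_mul]
  have habsg : ‖gfun a n z‖
      = ‖subProd a n z‖ * Real.sqrt (1 - ‖A‖ ^ 2)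
          / ‖1 - (starRingEnd ℂ) A * z‖ := by
    unfold gfun
    rw [← hA, norm_div, norm_mul, Complex.norm_real, Real.norm_eq_abs,
      _root_.abs_of_nonneg (Real.sqrt_nonneg _)]
  have hid : ‖1 - (starRingEnd ℂ) A * z‖ ^ 2 - ‖A - z‖ ^ 2
      = (1 - ‖A‖ ^ 2) * (1 - ‖z‖ ^ 2) := by
    rw [Complex.sq_norm, Complex.sq_norm, ← Complex.normSq_eq_norm_sq, ← Complex.normSq_eq_norm_sq]
    exact aux_normSq_identity A z
  have hs : Real.sqrt (1 - ‖A‖ ^ 2) ^ 2 = 1 - ‖A‖ ^ 2 :=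
    Real.sq_sqrt (by nlinarith)
  rw [hsucc, norm_mul, habsg, habsb]
  field_simp
  linear_combination (‖subProd a n z‖) ^ 2 * (1 - ‖z‖ ^ 2) * hs
    - (‖subProd a n z‖) ^ 2 * hid

/-- Bound on `|bFactor - 1|`. -/
lemma aux_bFactor_sub_one (A z : ℂ)
    (h0 : 0 < ‖A‖) (h1 : ‖A‖ < 1) (hz : ‖z‖ < 1) :
    ‖bFactor A z - 1‖
      ≤ (1 - ‖A‖) * ((1 + ‖z‖) / (1 - ‖z‖)) := by
  set r : ℝ := ‖A‖ with hr
  have hD : (1 - (starRingEnd ℂ) A * z) ≠ 0 := aux_denom_ne A z h1.le hz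
  have hrc : (r : ℂ) ≠ 0 := by exact_mod_cast ne_of_gt h0
  have huA : (starRingEnd ℂ) A * A = (r : ℂ) ^ 2 := by
    rw [mul_comm, Complex.mul_conj, Complex.normSq_eq_norm_sq]
    push_cast
    ring
  have key : bFactor A z - 1
      = (((r : ℂ) - 1) * ((r : ℂ) + (starRingEnd ℂ) A * z)) / ((r : ℂ) * (1 - (starRingEnd ℂ) A * z)) := by
    unfold bFactor
    rw [← hr]
    field_simp
    linear_combination (1 - (starRingEnd ℂ) A * z) * huA + (starRingEnd ℂ) A * z * huA
  have habs1 : ‖(r : ℂ) - 1‖ = 1 - r := by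
    rw [show ((r : ℂ) - 1) = ((r - 1 : ℝ) : ℂ) by push_cast; ring, Complex.norm_real, Real.norm_eq_abs,
      abs_sub_comm, _root_.abs_of_nonneg (by linarith)]
  have habsr : ‖(r : ℂ)‖ = r := by
    rw [Complex.norm_real, Real.norm_eq_abs, _root_.abs_of_nonneg h0.le]
  have hnum : ‖(r : ℂ) + (starRingEnd ℂ) A * z‖ ≤ r * (1 + ‖z‖) := by
    calc ‖(r : ℂ) + (starRingEnd ℂ) A * z‖
        ≤ ‖(r : ℂ)‖ + ‖(starRingEnd ℂ) A * z‖ := norm_add_le _ _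
      _ = r + r * ‖z‖ := by rw [habsr, norm_mul, Complex.norm_conj, ← hr]
      _ = r * (1 + ‖z‖) := by ring
  have hden : 1 - ‖z‖ ≤ ‖1 - (starRingEnd ℂ) A * z‖ :=
    aux_denom_lb A z h1.le
  have hzpos : (0 : ℝ) < 1 - ‖z‖ := by linarith
  rw [key, norm_div, norm_mul, norm_mul, habs1, habsr]
  calc (1 - r) * ‖(r : ℂ) + (starRingEnd ℂ) A * z‖
        / (r * ‖1 - (starRingEnd ℂ) A * z‖)
      ≤ ((1 - r) * (r * (1 + ‖z‖))) / (r * (1 - ‖z‖)) := by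
        apply div_le_div₀
        · exact mul_nonneg (by linarith) (by positivity)
        · exact mul_le_mul_of_nonneg_left hnum (by linarith)
        · positivity
        · exact mul_le_mul_of_nonneg_left hden h0.le
    _ = (1 - r) * ((1 + ‖z‖) / (1 - ‖z‖)) := by
        field_simp

/-- Partial products converge to the Blaschke product. -/
lemma aux_tendsto_subProd (a : ℕ → ℂ)
    (ha : ∀ n, 0 < ‖a n‖ ∧ ‖a n‖ < 1)
    (hbl : Summable (fun n => 1 - ‖a n‖)) (z : ℂ) (hz : ‖z‖ < 1) :
    Filter.Tendsto (fun N => subProd a N z) Filter.atTop (nhds (blaschke a z)) := by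
  by_cases hzero : ∃ n, a n = z
  · obtain ⟨n0, hn0⟩ := hzero
    have hfz : bFactor (a n0) z = 0 := by
      simp [bFactor, hn0]
    have h0 : HasProd (fun n => bFactor (a n) z) 0 := by
      rw [HasProd]
      refine Filter.Tendsto.congr' ?_ tendsto_const_nhds
      filter_upwards [Filter.eventually_ge_atTop ({n0} : Finset ℕ)] with s hs
      exact (Finset.prod_eq_zero (hs (Finset.mem_singleton_self n0)) hfz).symm
    have hbz : blaschke a z = 0 := h0.tprod_eq
    rw [hbz]
    refine Filter.Tendsto.congr' ?_ tendsto_const_nhds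
    filter_upwards [Filter.eventually_ge_atTop (n0 + 1)] with N hN
    exact (Finset.prod_eq_zero (Finset.mem_range.mpr (by omega)) hfz).symm
  · push_neg at hzero
    have hne : ∀ n, bFactor (a n) z ≠ 0 := by
      intro n
      have hD : (1 - (starRingEnd ℂ) (a n) * z) ≠ 0 := aux_denom_ne _ _ (ha n).2.le hz
      have h1 : (starRingEnd ℂ) (a n) ≠ 0 := by
        simpa using fun h => (ha n).1.ne' (by simp [h])
      have h2 : ((‖a n‖ : ℝ) : ℂ) ≠ 0 := by
        exact_mod_cast (ha n).1.ne'
      have h3 : a n - z ≠ 0 := sub_ne_zero.mpr (hzero n)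
      exact mul_ne_zero (div_ne_zero h1 h2) (div_ne_zero h3 hD)
    set K : ℝ := (1 + ‖z‖) / (1 - ‖z‖) with hK
    have hK0 : 0 ≤ K := by
      apply div_nonneg
      · positivity
      · linarith
    have hbound : ∀ n, ‖bFactor (a n) z - 1‖ ≤ (1 - ‖a n‖) * K :=
      fun n => aux_bFactor_sub_one (a n) z (ha n).1 (ha n).2 hz
    have htend : Filter.Tendsto (fun n => (1 - ‖a n‖) * K) Filter.atTop (nhds 0) := by
      simpa using hbl.tendsto_atTop_zero.mul_const K
    have hev : ∀ᶠ n in Filter.atTop, (1 - ‖a n‖) * K ≤ 1 / 2 :=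
      htend.eventually_le_const (by norm_num)
    have hlog : Summable fun n => Complex.log (bFactor (a n) z) := by
      apply Summable.of_norm_bounded_eventually_nat
        (g := fun n => 3 / 2 * ((1 - ‖a n‖) * K))
      · exact (hbl.mul_right K).mul_left (3 / 2)
      · filter_upwards [hev] with n hn
        have h1 : ‖bFactor (a n) z - 1‖ ≤ 1 / 2 := by
          exact le_trans (hbound n) hn
        have h2 := Complex.norm_log_one_add_half_le_self h1
        rw [show (1 : ℂ) + (bFactor (a n) z - 1) = bFactor (a n) z by ring] at h2
        refine h2.trans ?_
        exact mul_le_mul_of_nonneg_left (le_trans (hbound n) (le_refl _)) (by norm_num)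
    have hm : Multipliable fun n => bFactor (a n) z :=
      Complex.multipliable_of_summable_log hlog
    exact hm.hasProd.tendsto_prod_nat



/-- Pointwise bound for model space functions: if `f = ∑ c_n g_n` with `∑ |c_n|² = M²`,
then `|f(z)| ≤ M·((1-|B(z)|²)/(1-|z|²))^{1/2}` and `|f(z)| ≤ M·(1-|z|)^{-1/2}` on `U`. -/
theorem stmt15 (a : ℕ → ℂ)
    (ha : ∀ n, 0 < ‖a n‖ ∧ ‖a n‖ < 1)
    (hblaschke : Summable (fun n => 1 - ‖a n‖))
    (B : ℂ → ℂ) (hB : ∀ z ∈ unitDisc, B z = blaschke a z)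
    (c : ℕ → ℂ) (hc : Summable (fun n => ‖c n‖ ^ 2))
    (M : ℝ) (hM : 0 ≤ M) (hM2 : (∑' n, ‖c n‖ ^ 2) = M ^ 2)
    (f : ℂ → ℂ) (hf : ∀ z ∈ unitDisc, f z = ∑' n, c n * gfun a n z) :
    ∀ z ∈ unitDisc,
      ‖f z‖ ≤
        M * Real.sqrt ((1 - ‖B z‖ ^ 2) / (1 - ‖z‖ ^ 2)) ∧
      ‖f z‖ ≤ M * (1 - ‖z‖) ^ (-(1 / 2) : ℝ) := by
  intro z hz
  have hzu : ‖z‖ < 1 := hz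
  have hz0 : 0 ≤ ‖z‖ := norm_nonneg z
  have h1z2 : (0 : ℝ) < 1 - ‖z‖ ^ 2 := by nlinarith
  have h1z : (0 : ℝ) < 1 - ‖z‖ := by linarith
  set S : ℝ := (1 - ‖blaschke a z‖ ^ 2) / (1 - ‖z‖ ^ 2) with hS
  have hT := aux_tendsto_subProd a ha hblaschke z hzu
  have hTabs : Filter.Tendsto (fun N => ‖subProd a N z‖) Filter.atTop
      (nhds (‖blaschke a z‖)) := (continuous_norm.tendsto _).comp hT
  have hTsq : Filter.Tendsto
      (fun N => (1 - ‖subProd a N z‖ ^ 2) / (1 - ‖z‖ ^ 2))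
      Filter.atTop (nhds S) := (tendsto_const_nhds.sub (hTabs.pow 2)).div_const _
  have hpartial : ∀ N, ∑ n ∈ Finset.range N, ‖gfun a n z‖ ^ 2
      = (1 - ‖subProd a N z‖ ^ 2) / (1 - ‖z‖ ^ 2) := by
    intro N
    have h1 : ∀ n ∈ Finset.range N, ‖gfun a n z‖ ^ 2
        = (‖subProd a n z‖ ^ 2 - ‖subProd a (n + 1) z‖ ^ 2)
            / (1 - ‖z‖ ^ 2) := by
      intro n _
      rw [← aux_gfun_sq a n z (ha n).1 (ha n).2 hzu]
      field_simp
    rw [Finset.sum_congr rfl h1, ← Finset.sum_div,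
      Finset.sum_range_sub' (fun n => ‖subProd a n z‖ ^ 2)]
    simp [subProd]
  have hsumg : HasSum (fun n => ‖gfun a n z‖ ^ 2) S := by
    rw [hasSum_iff_tendsto_nat_of_nonneg (fun i => sq_nonneg _)]
    exact hTsq.congr (fun N => (hpartial N).symm)
  have hS0 : 0 ≤ S := by
    rw [← hsumg.tsum_eq]
    exact tsum_nonneg fun i => sq_nonneg _
  have hMS0 : 0 ≤ M * Real.sqrt S := mul_nonneg hM (Real.sqrt_nonneg _)
  have hCS : ∀ N, ∑ n ∈ Finset.range N, ‖c n‖ * ‖gfun a n z‖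
      ≤ M * Real.sqrt S := by
    intro N
    have h2 := Finset.sum_mul_sq_le_sq_mul_sq (Finset.range N)
      (fun n => ‖c n‖) (fun n => ‖gfun a n z‖)
    have h3 : ∑ n ∈ Finset.range N, ‖c n‖ ^ 2 ≤ M ^ 2 := by
      rw [← hM2]
      exact hc.sum_le_tsum _ (fun n _ => sq_nonneg _)
    have h4 : ∑ n ∈ Finset.range N, ‖gfun a n z‖ ^ 2 ≤ S :=
      sum_le_hasSum _ (fun n _ => sq_nonneg _) hsumg
    have h5 : (∑ n ∈ Finset.range N, ‖c n‖ * ‖gfun a n z‖) ^ 2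
        ≤ (M * Real.sqrt S) ^ 2 := by
      have hsq : (M * Real.sqrt S) ^ 2 = M ^ 2 * S := by
        rw [mul_pow, Real.sq_sqrt hS0]
      rw [hsq]
      calc (∑ n ∈ Finset.range N, ‖c n‖ * ‖gfun a n z‖) ^ 2
          ≤ (∑ n ∈ Finset.range N, ‖c n‖ ^ 2)
              * ∑ n ∈ Finset.range N, ‖gfun a n z‖ ^ 2 := h2
        _ ≤ M ^ 2 * S :=
          mul_le_mul h3 h4 (Finset.sum_nonneg fun n _ => sq_nonneg _) (by positivity)
    have h6 : 0 ≤ ∑ n ∈ Finset.range N, ‖c n‖ * ‖gfun a n z‖ :=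
      Finset.sum_nonneg fun n _ => mul_nonneg (norm_nonneg _) (norm_nonneg _)
    nlinarith [h5, h6, hMS0]
  have hnn : ∀ n, 0 ≤ ‖c n‖ * ‖gfun a n z‖ :=
    fun n => mul_nonneg (norm_nonneg _) (norm_nonneg _)
  have hnorm_sum : Summable (fun n => ‖c n‖ * ‖gfun a n z‖) :=
    summable_of_sum_range_le hnn hCS
  have hns : Summable (fun n => ‖c n * gfun a n z‖) :=
    hnorm_sum.congr fun n => by simp
  have hfz : ‖f z‖ ≤ M * Real.sqrt S := by
    rw [hf z hz]
    calc ‖∑' n, c n * gfun a n z‖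
        = ‖∑' n, c n * gfun a n z‖ := rfl
      _ ≤ ∑' n, ‖c n * gfun a n z‖ := norm_tsum_le_tsum_norm hns
      _ = ∑' n, ‖c n‖ * ‖gfun a n z‖ :=
          tsum_congr fun n => by simp
      _ ≤ M * Real.sqrt S := Real.tsum_le_of_sum_range_le hnn hCS
  have hcomp : S ≤ (1 - ‖z‖)⁻¹ := by
    rw [hS, div_le_iff₀ h1z2]
    have e : (1 - ‖z‖)⁻¹ * (1 - ‖z‖ ^ 2) = 1 + ‖z‖ := by
      field_simp
      ring
    rw [e]
    nlinarith [sq_nonneg (‖blaschke a z‖), hz0]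
  have hrpow : (1 - ‖z‖) ^ (-(1 / 2) : ℝ)
      = Real.sqrt ((1 - ‖z‖)⁻¹) := by
    rw [Real.sqrt_inv, Real.sqrt_eq_rpow, ← Real.rpow_neg h1z.le]
  have h8 : M * Real.sqrt S ≤ M * (1 - ‖z‖) ^ (-(1 / 2) : ℝ) := by
    rw [hrpow]
    exact mul_le_mul_of_nonneg_left (Real.sqrt_le_sqrt hcomp) hM
  constructor
  · rw [hB z hz]
    exact hfz
  · exact hfz.trans h8
end
end
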